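/- Let μ be a probability measure with support contained in ℝ and let r, l be as defined (l ≤ 0 ≤ r possibly l = r = 0). Along any level curve x(t,π) with μ_{t,x(t,π)}([0,∞)) = π fixed, the truncated posterior means converge: E_{t,x(t,π)}[B 1_{B≥0}] → π·r and E_{t,x(t,π)}[B 1_{B<0}] → (1-π)·l as t → ∞. Consequently σ(t,π) = (1-π) E[B1_{B≥0}] - π E[B1_{B<0}] converges to (r - l) π (1 - π). -/

import Mathlib

open MeasureTheory Set Filter
set_option maxHeartbeats 1000000

/-- The posterior probability that the drift lies in `S` under the tilted measure `μ_{t,x}`. -/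
noncomputable def tiltProb (μ : Measure ℝ) (t x : ℝ) (S : Set ℝ) : ℝ :=
  (∫ b in S, Real.exp (b * x - b ^ 2 * t / 2) ∂μ) /
  (∫ b, Real.exp (b * x - b ^ 2 * t / 2) ∂μ)

/-- The truncated posterior mean `E_{t,x}[B 1_S(B)]` under the tilted measure `μ_{t,x}`. -/
noncomputable def tiltMean (μ : Measure ℝ) (t x : ℝ) (S : Set ℝ) : ℝ :=
  (∫ b in S, b * Real.exp (b * x - b ^ 2 * t / 2) ∂μ) /
  (∫ b, Real.exp (b * x - b ^ 2 * t / 2) ∂μ)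

/-- The left endpoint `r` of the support of `μ` restricted to `[0,∞)`. -/
noncomputable def rEnd (μ : Measure ℝ) : ℝ :=
  sInf {s : ℝ | 0 ≤ s ∧ ∀ ε > (0:ℝ), 0 < μ (Set.Ico s (s + ε))}

/-- The right endpoint `l` of the support of `μ` restricted to `(-∞,0)`. -/
noncomputable def lEnd (μ : Measure ℝ) : ℝ :=
  sSup {s : ℝ | s < 0 ∧ ∀ ε > (0:ℝ), 0 < μ (Set.Ioc (s - ε) s)}


lemma aux_int_of_bound (μ : Measure ℝ) [IsFiniteMeasure μ] {f : ℝ → ℝ} (hf : Continuous f)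
    (C : ℝ) (h : ∀ b, |f b| ≤ C) : Integrable f μ :=
  (integrable_const C).mono' hf.aestronglyMeasurable (ae_of_all _ (fun b => by
    simpa using h b))

lemma exp_quad_bound {t : ℝ} (x b : ℝ) (ht : 0 < t) : b * x - b ^ 2 * t / 2 ≤ x ^ 2 / t - b ^ 2 * t / 4 := by
  have h : 0 ≤ (t * b - 2 * x) ^ 2 / (4 * t) := by positivity
  have e : (t * b - 2 * x) ^ 2 / (4 * t) = x ^ 2 / t - b ^ 2 * t / 4 - (b * x - b ^ 2 * t / 2) := by
    field_simp; ring
  linarith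

lemma integrable_W (μ : Measure ℝ) [IsFiniteMeasure μ] {t : ℝ} (x : ℝ) (ht : 0 < t) :
    Integrable (fun b => Real.exp (b * x - b ^ 2 * t / 2)) μ := by
  apply aux_int_of_bound μ (by continuity) (Real.exp (x ^ 2 / t))
  intro b
  rw [abs_of_nonneg (Real.exp_nonneg _)]
  apply Real.exp_le_exp.2
  have := exp_quad_bound x b ht
  nlinarith [sq_nonneg b, ht.le]

lemma sq_exp_le {u : ℝ} (hu : 0 ≤ u) : u * Real.exp (-u) ≤ 1 := by
  have h1 : u ≤ Real.exp u := by nlinarith [Real.add_one_le_exp u]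
  have h2 : Real.exp (-u) = (Real.exp u)⁻¹ := by rw [Real.exp_neg]
  rw [h2]
  rw [mul_inv_le_iff₀ (Real.exp_pos u), one_mul]
  exact h1

lemma integrable_bW (μ : Measure ℝ) [IsFiniteMeasure μ] {t : ℝ} (x : ℝ) (ht : 0 < t) :
    Integrable (fun b => b * Real.exp (b * x - b ^ 2 * t / 2)) μ := by
  apply aux_int_of_bound μ (by continuity) (Real.exp (x ^ 2 / t) * (1 + 4 / t))
  intro b
  rw [abs_mul, abs_of_nonneg (Real.exp_nonneg _)]
  have h1 : Real.exp (b * x - b ^ 2 * t / 2) ≤ Real.exp (x ^ 2 / t) * Real.exp (-(b ^ 2 * t / 4)) := by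
    rw [← Real.exp_add]
    apply Real.exp_le_exp.2
    have := exp_quad_bound x b ht
    linarith
  have h2 : |b| * Real.exp (-(b ^ 2 * t / 4)) ≤ 1 + 4 / t := by
    rcases le_or_gt |b| 1 with hb | hb
    · have : Real.exp (-(b ^ 2 * t / 4)) ≤ 1 := by
        apply Real.exp_le_one_iff.2; nlinarith [sq_nonneg b]
      nlinarith [Real.exp_nonneg (-(b ^ 2 * t / 4)), div_nonneg (le_of_lt (by norm_num : (0:ℝ) < 4)) ht.le]
    · have hb2 : |b| ≤ b ^ 2 := by nlinarith [abs_nonneg b, sq_abs b]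
      have h3 : (b ^ 2 * t / 4) * Real.exp (-(b ^ 2 * t / 4)) ≤ 1 :=
        sq_exp_le (by positivity)
      have ht4 : (0:ℝ) < t / 4 := by linarith
      have : b ^ 2 * Real.exp (-(b ^ 2 * t / 4)) ≤ 4 / t := by
        rw [le_div_iff₀ ht]
        have e := Real.exp_nonneg (-(b ^ 2 * t / 4))
        nlinarith
      nlinarith [Real.exp_nonneg (-(b ^ 2 * t / 4)), abs_nonneg b,
        mul_le_mul_of_nonneg_right hb2 (Real.exp_nonneg (-(b ^ 2 * t / 4)))]
  calc |b| * Real.exp (b * x - b ^ 2 * t / 2)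
      ≤ |b| * (Real.exp (x ^ 2 / t) * Real.exp (-(b ^ 2 * t / 4))) :=
        mul_le_mul_of_nonneg_left h1 (abs_nonneg b)
    _ = Real.exp (x ^ 2 / t) * (|b| * Real.exp (-(b ^ 2 * t / 4))) := by ring
    _ ≤ Real.exp (x ^ 2 / t) * (1 + 4 / t) := mul_le_mul_of_nonneg_left h2 (Real.exp_nonneg _)

lemma integrable_abs_id (μ : Measure ℝ) [IsFiniteMeasure μ] {ε : ℝ} (hε : 0 < ε)
    (hexp : Integrable (fun b => Real.exp (ε * b ^ 2)) μ) :
    Integrable (fun b : ℝ => |b|) μ := by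
  apply Integrable.mono' ((integrable_const 1).add (hexp.const_mul ε⁻¹))
    (continuous_abs.aestronglyMeasurable)
  apply ae_of_all
  intro b
  simp only [Real.norm_eq_abs, abs_abs, Pi.add_apply]
  have h1 : ε * b ^ 2 ≤ Real.exp (ε * b ^ 2) := by nlinarith [Real.add_one_le_exp (ε * b ^ 2)]
  have h2 : b ^ 2 ≤ ε⁻¹ * Real.exp (ε * b ^ 2) := by
    rw [← mul_le_mul_iff_of_pos_left hε, ← mul_assoc, mul_inv_cancel₀ (ne_of_gt hε), one_mul]
    exact h1
  have h3 : |b| ≤ 1 + b ^ 2 := by nlinarith [abs_nonneg b, sq_abs b]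
  linarith


/-- From positive mass on `Ico a c`, find a point `s ∈ [a,c]` whose left neighborhoods
`Ioc (s-ε) s` all have positive mass. -/
lemma exists_left_support_pt (μ : Measure ℝ) {a c : ℝ} (h : μ (Ico a c) ≠ 0) :
    ∃ s, a ≤ s ∧ s ≤ c ∧ ∀ ε > (0:ℝ), 0 < μ (Ioc (s - ε) s) := by
  set A : Set ℝ := {s : ℝ | μ (Ico a c ∩ Ioi s) = 0} with hA
  have hcA : c ∈ A := by
    simp only [hA, mem_setOf_eq]
    convert measure_empty (μ := μ)
    ext b; simp only [mem_inter_iff, mem_Ico, mem_Ioi, mem_empty_iff_false, iff_false]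
    rintro ⟨⟨_, h2⟩, h3⟩; exact absurd h3 (not_lt.2 h2.le)
  have hAa : ∀ s ∈ A, a ≤ s := by
    intro s hs
    by_contra hsa
    push_neg at hsa
    apply h
    have : Ico a c ∩ Ioi s = Ico a c := by
      apply inter_eq_self_of_subset_left
      intro b hb; exact lt_of_lt_of_le hsa hb.1
    rw [← this]; exact hs
  have hne : A.Nonempty := ⟨c, hcA⟩
  have hbdd : BddBelow A := ⟨a, fun s hs => hAa s hs⟩
  set s₀ := sInf A with hs₀
  refine ⟨s₀, le_csInf hne hAa, csInf_le hbdd hcA, ?_⟩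
  have hnull : μ (Ico a c ∩ Ioi s₀) = 0 := by
    have hsub : Ico a c ∩ Ioi s₀ ⊆ ⋃ n : ℕ, Ico a c ∩ Ioi (s₀ + 1 / (n + 1)) := by
      intro b ⟨hb1, hb2⟩
      obtain ⟨n, hn⟩ := exists_nat_one_div_lt (show (0:ℝ) < b - s₀ from sub_pos.2 hb2)
      exact mem_iUnion.2 ⟨n, hb1, by simp only [mem_Ioi]; linarith [hn]⟩
    apply measure_mono_null hsub
    rw [measure_iUnion_null_iff]
    intro n
    have h1 : (0:ℝ) < 1 / (n + 1) := by positivity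
    obtain ⟨s, hsA, hs⟩ := exists_lt_of_csInf_lt hne (by linarith : s₀ < s₀ + 1 / (n + 1))
    apply measure_mono_null _ hsA
    exact inter_subset_inter_right _ (fun b hb => lt_of_le_of_lt (show s ≤ s₀ + 1 / (n + 1) by linarith) hb)
  intro ε hε
  have hs₀ε : s₀ - ε ∉ A := fun hmem => absurd (csInf_le hbdd hmem) (by linarith)
  have hpos : 0 < μ (Ico a c ∩ Ioi (s₀ - ε)) := by
    rw [pos_iff_ne_zero]; exact hs₀ε
  have hsub : Ico a c ∩ Ioi (s₀ - ε) ⊆ (Ico a c ∩ Ioi s₀) ∪ Ioc (s₀ - ε) s₀ := by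
    intro b ⟨hb1, hb2⟩
    rcases le_or_gt b s₀ with hb3 | hb3
    · exact Or.inr ⟨hb2, hb3⟩
    · exact Or.inl ⟨hb1, hb3⟩
  calc (0:ENNReal) < μ (Ico a c ∩ Ioi (s₀ - ε)) := hpos
    _ ≤ μ (Ico a c ∩ Ioi s₀) + μ (Ioc (s₀ - ε) s₀) := le_trans (measure_mono hsub) (measure_union_le _ _)
    _ = μ (Ioc (s₀ - ε) s₀) := by rw [hnull, zero_add]

/-- From positive mass on `Icc a c`, find a point `s ∈ [a,c]` whose right neighborhoods
`Ico s (s+ε)` all have positive mass. -/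
lemma exists_right_support_pt (μ : Measure ℝ) {a c : ℝ} (h : μ (Icc a c) ≠ 0) :
    ∃ s, a ≤ s ∧ s ≤ c ∧ ∀ ε > (0:ℝ), 0 < μ (Ico s (s + ε)) := by
  set A : Set ℝ := {s : ℝ | μ (Icc a c ∩ Iio s) = 0} with hA
  have haA : a ∈ A := by
    simp only [hA, mem_setOf_eq]
    convert measure_empty (μ := μ)
    ext b; simp only [mem_inter_iff, mem_Icc, mem_Iio, mem_empty_iff_false, iff_false]
    rintro ⟨⟨h1, _⟩, h3⟩; exact absurd h3 (not_lt.2 h1)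
  have hAc : ∀ s ∈ A, s ≤ c := by
    intro s hs
    by_contra hsc
    push_neg at hsc
    apply h
    have : Icc a c ∩ Iio s = Icc a c := by
      apply inter_eq_self_of_subset_left
      intro b hb; exact lt_of_le_of_lt hb.2 hsc
    rw [← this]; exact hs
  have hne : A.Nonempty := ⟨a, haA⟩
  have hbdd : BddAbove A := ⟨c, fun s hs => hAc s hs⟩
  set s₀ := sSup A with hs₀
  refine ⟨s₀, le_csSup hbdd haA, csSup_le hne hAc, ?_⟩
  have hnull : μ (Icc a c ∩ Iio s₀) = 0 := by
    have hsub : Icc a c ∩ Iio s₀ ⊆ ⋃ n : ℕ, Icc a c ∩ Iio (s₀ - 1 / (n + 1)) := by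
      intro b ⟨hb1, hb2⟩
      obtain ⟨n, hn⟩ := exists_nat_one_div_lt (show (0:ℝ) < s₀ - b from sub_pos.2 hb2)
      exact mem_iUnion.2 ⟨n, hb1, by simp only [mem_Iio]; linarith [hn]⟩
    apply measure_mono_null hsub
    rw [measure_iUnion_null_iff]
    intro n
    have h1 : (0:ℝ) < 1 / (n + 1) := by positivity
    obtain ⟨s, hsA, hs⟩ := exists_lt_of_lt_csSup hne (by linarith : s₀ - 1 / (n + 1) < s₀)
    refine measure_mono_null (inter_subset_inter_right _ ?_) hsA
    intro b hb
    simp only [mem_Iio] at *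
    linarith
  intro ε hε
  have hs₀ε : s₀ + ε ∉ A := fun hmem => absurd (le_csSup hbdd hmem) (by linarith)
  have hpos : 0 < μ (Icc a c ∩ Iio (s₀ + ε)) := by
    rw [pos_iff_ne_zero]; exact hs₀ε
  have hsub : Icc a c ∩ Iio (s₀ + ε) ⊆ (Icc a c ∩ Iio s₀) ∪ Ico s₀ (s₀ + ε) := by
    intro b ⟨hb1, hb2⟩
    rcases lt_or_ge b s₀ with hb3 | hb3
    · exact Or.inl ⟨hb1, hb3⟩
    · exact Or.inr ⟨hb3, hb2⟩
  calc (0:ENNReal) < μ (Icc a c ∩ Iio (s₀ + ε)) := hpos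
    _ ≤ μ (Icc a c ∩ Iio s₀) + μ (Ico s₀ (s₀ + ε)) := le_trans (measure_mono hsub) (measure_union_le _ _)
    _ = μ (Ico s₀ (s₀ + ε)) := by rw [hnull, zero_add]



lemma rEnd_facts (μ : Measure ℝ) (hμ0 : μ (Set.Ici (0:ℝ)) ≠ 0) :
    0 ≤ rEnd μ ∧ (∀ ε > (0:ℝ), 0 < μ (Ico (rEnd μ) (rEnd μ + ε))) ∧ μ (Ico 0 (rEnd μ)) = 0 := by
  set S : Set ℝ := {s : ℝ | 0 ≤ s ∧ ∀ ε > (0:ℝ), 0 < μ (Set.Ico s (s + ε))} with hS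
  have hne : S.Nonempty := by
    have h1 : ∃ n : ℕ, μ (Icc (0:ℝ) n) ≠ 0 := by
      by_contra hc
      push_neg at hc
      apply hμ0
      apply measure_mono_null _ (measure_iUnion_null_iff.2 hc)
      intro b hb
      obtain ⟨n, hn⟩ := exists_nat_ge b
      exact mem_iUnion.2 ⟨n, hb, hn⟩
    obtain ⟨n, hn⟩ := h1
    obtain ⟨s, hs1, _, hs3⟩ := exists_right_support_pt μ hn
    exact ⟨s, hs1, hs3⟩
  have hbdd : BddBelow S := ⟨0, fun s hs => hs.1⟩
  have hr0 : 0 ≤ rEnd μ := le_csInf hne (fun s hs => hs.1)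
  refine ⟨hr0, ?_, ?_⟩
  · intro ε hε
    obtain ⟨s, hsS, hs⟩ := exists_lt_of_csInf_lt hne
      (show rEnd μ < rEnd μ + ε / 2 by linarith)
    have hrs : rEnd μ ≤ s := csInf_le hbdd hsS
    have := hsS.2 (ε/2) (by linarith)
    refine lt_of_lt_of_le this (measure_mono ?_)
    intro b hb
    exact ⟨le_trans hrs hb.1, by simp only [mem_Ico] at *; linarith [hb.2]⟩
  · by_contra hc
    have hrpos : 0 < rEnd μ := by
      rcases lt_or_eq_of_le hr0 with h | h
      · exact h
      · exfalso; apply hc; rw [← h]; simp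
    have h1 : ∃ n : ℕ, μ (Icc (0:ℝ) (rEnd μ - 1/(n+1))) ≠ 0 := by
      by_contra hc2
      push_neg at hc2
      apply hc
      apply measure_mono_null _ (measure_iUnion_null_iff.2 hc2)
      intro b hb
      obtain ⟨n, hn⟩ := exists_nat_one_div_lt (show (0:ℝ) < rEnd μ - b from sub_pos.2 hb.2)
      exact mem_iUnion.2 ⟨n, hb.1, by linarith [hn]⟩
    obtain ⟨n, hn⟩ := h1
    obtain ⟨s, hs1, hs2, hs3⟩ := exists_right_support_pt μ hn
    have : rEnd μ ≤ s := csInf_le hbdd ⟨hs1, hs3⟩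
    have h2 : (0:ℝ) < 1/(n+1) := by positivity
    linarith

lemma lEnd_facts (μ : Measure ℝ) (hμ0 : μ (Set.Iio (0:ℝ)) ≠ 0) :
    lEnd μ ≤ 0 ∧ (∀ ε > (0:ℝ), 0 < μ (Ioc (lEnd μ - ε) (lEnd μ) ∩ Iio 0)) ∧
      μ (Ioo (lEnd μ) 0) = 0 := by
  set S : Set ℝ := {s : ℝ | s < 0 ∧ ∀ ε > (0:ℝ), 0 < μ (Set.Ioc (s - ε) s)} with hS
  have hne : S.Nonempty := by
    have h1 : ∃ n : ℕ, μ (Ico (-(n+1) : ℝ) (-(1/(n+1)))) ≠ 0 := by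
      by_contra hc
      push_neg at hc
      apply hμ0
      apply measure_mono_null _ (measure_iUnion_null_iff.2 hc)
      intro b hb
      simp only [mem_Iio] at hb
      obtain ⟨n1, hn1⟩ := exists_nat_ge (-b)
      obtain ⟨n2, hn2⟩ := exists_nat_one_div_lt (show (0:ℝ) < -b by linarith)
      refine mem_iUnion.2 ⟨max n1 n2, ?_, ?_⟩
      · have : (n1:ℝ) ≤ (max n1 n2 : ℕ) := by exact_mod_cast Nat.cast_le.2 (le_max_left n1 n2)
        linarith
      · have h2 : 1/((max n1 n2 : ℕ):ℝ) ≤ 1/(n2:ℝ) ∨ True := Or.inr trivial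
        have hle : 1/((max n1 n2 : ℕ) + 1 :ℝ) ≤ 1/((n2:ℝ)+1) := by
          apply one_div_le_one_div_of_le (by positivity)
          have : (n2:ℝ) ≤ (max n1 n2 : ℕ) := by exact_mod_cast Nat.cast_le.2 (le_max_right n1 n2)
          linarith
        linarith
    obtain ⟨n, hn⟩ := h1
    obtain ⟨s, hs1, hs2, hs3⟩ := exists_left_support_pt μ hn
    have : s < 0 := lt_of_le_of_lt hs2 (neg_lt_zero.mpr (by positivity))
    exact ⟨s, this, hs3⟩
  have hbdd : BddAbove S := ⟨0, fun s hs => hs.1.le⟩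
  have hl0 : lEnd μ ≤ 0 := csSup_le hne (fun s hs => hs.1.le)
  refine ⟨hl0, ?_, ?_⟩
  · intro ε hε
    obtain ⟨s, hsS, hs⟩ := exists_lt_of_lt_csSup hne
      (show lEnd μ - ε / 2 < lEnd μ by linarith)
    have hls : s ≤ lEnd μ := le_csSup hbdd hsS
    have := hsS.2 (ε/2) (by linarith)
    refine lt_of_lt_of_le this (measure_mono ?_)
    intro b hb
    simp only [mem_Ioc] at hb
    refine ⟨⟨by linarith [hb.1], by linarith [hb.2]⟩, ?_⟩
    simp only [mem_Iio]
    exact lt_of_le_of_lt hb.2 hsS.1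
  · by_contra hc
    have h1 : ∃ n : ℕ, μ (Ico (lEnd μ + 1/(n+1)) (-(1/(n+1)))) ≠ 0 := by
      by_contra hc2
      push_neg at hc2
      apply hc
      apply measure_mono_null _ (measure_iUnion_null_iff.2 hc2)
      intro b hb
      simp only [mem_Ioo] at hb
      obtain ⟨n1, hn1⟩ := exists_nat_one_div_lt (show (0:ℝ) < b - lEnd μ from sub_pos.2 hb.1)
      obtain ⟨n2, hn2⟩ := exists_nat_one_div_lt (show (0:ℝ) < -b by linarith [hb.2])
      refine mem_iUnion.2 ⟨max n1 n2, ?_⟩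
      have hle1 : 1/((max n1 n2 : ℕ) + 1 :ℝ) ≤ 1/((n1:ℝ)+1) := by
        apply one_div_le_one_div_of_le (by positivity)
        have : (n1:ℝ) ≤ (max n1 n2 : ℕ) := by exact_mod_cast Nat.cast_le.2 (le_max_left n1 n2)
        linarith
      have hle2 : 1/((max n1 n2 : ℕ) + 1 :ℝ) ≤ 1/((n2:ℝ)+1) := by
        apply one_div_le_one_div_of_le (by positivity)
        have : (n2:ℝ) ≤ (max n1 n2 : ℕ) := by exact_mod_cast Nat.cast_le.2 (le_max_right n1 n2)
        linarith
      simp only [mem_Ico]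
      constructor <;> linarith
    obtain ⟨n, hn⟩ := h1
    have h2 : (0:ℝ) < 1/(n+1) := by positivity
    obtain ⟨s, hs1, hs2, hs3⟩ := exists_left_support_pt μ hn
    have hsS : s ∈ S := ⟨lt_of_le_of_lt hs2 (by linarith), hs3⟩
    have : s ≤ lEnd μ := le_csSup hbdd hsS
    linarith





lemma intOn_of_bound (μ : Measure ℝ) [IsFiniteMeasure μ] {f : ℝ → ℝ} (hf : Continuous f)
    {s : Set ℝ} (hs : MeasurableSet s) (C : ℝ) (h : ∀ b ∈ s, |f b| ≤ C) :
    IntegrableOn f s μ :=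
  (integrable_const C).mono' hf.aestronglyMeasurable ((ae_restrict_iff' hs).2 (ae_of_all _ h))

/-- Basic consequences of the level-curve constraint at a fixed time. -/
lemma basics (μ : Measure ℝ) [IsProbabilityMeasure μ] {t xt p : ℝ} (ht : 0 < t)
    (hp : p ∈ Set.Ioo (0:ℝ) 1)
    (hxt : (∫ b in Ici (0:ℝ), Real.exp (b * xt - b ^ 2 * t / 2) ∂μ) /
      (∫ b, Real.exp (b * xt - b ^ 2 * t / 2) ∂μ) = p) :
    0 < (∫ b, Real.exp (b * xt - b ^ 2 * t / 2) ∂μ) ∧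
    (∫ b in Ici (0:ℝ), Real.exp (b * xt - b ^ 2 * t / 2) ∂μ) =
      p * (∫ b, Real.exp (b * xt - b ^ 2 * t / 2) ∂μ) ∧
    (∫ b in Iio (0:ℝ), Real.exp (b * xt - b ^ 2 * t / 2) ∂μ) =
      (1 - p) * (∫ b, Real.exp (b * xt - b ^ 2 * t / 2) ∂μ) := by
  have hint := integrable_W μ xt ht
  have hZ : 0 < (∫ b, Real.exp (b * xt - b ^ 2 * t / 2) ∂μ) := integral_exp_pos hint
  have hAp : (∫ b in Ici (0:ℝ), Real.exp (b * xt - b ^ 2 * t / 2) ∂μ) =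
      p * (∫ b, Real.exp (b * xt - b ^ 2 * t / 2) ∂μ) := by
    rw [div_eq_iff (ne_of_gt hZ)] at hxt
    exact hxt
  refine ⟨hZ, hAp, ?_⟩
  have hsplit := integral_add_compl (measurableSet_Iio (a := (0:ℝ))) hint
  rw [Set.compl_Iio] at hsplit
  linarith [hsplit, hAp]

/-- Step A+: eventually the drift `x t / t` is at most `r + η`. -/
lemma stepA_plus (μ : Measure ℝ) [IsProbabilityMeasure μ] {p r η : ℝ}
    (hp : p ∈ Set.Ioo (0:ℝ) 1) (hr0 : 0 ≤ r) (hη : 0 < η)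
    (hcη : μ (Ico r (r + η)) ≠ 0) (x : ℝ → ℝ)
    (hZ : ∀ t ≥ (1:ℝ),
      (∫ b in Ici (0:ℝ), Real.exp (b * x t - b ^ 2 * t / 2) ∂μ) =
        p * (∫ b, Real.exp (b * x t - b ^ 2 * t / 2) ∂μ) ∧
      (∫ b in Iio (0:ℝ), Real.exp (b * x t - b ^ 2 * t / 2) ∂μ) =
        (1 - p) * (∫ b, Real.exp (b * x t - b ^ 2 * t / 2) ∂μ)) :
    ∃ T ≥ (1:ℝ), ∀ t ≥ T, x t ≤ (r + η) * t := by
  obtain ⟨hp0, hp1⟩ := hp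
  set c : ℝ := (μ (Ico r (r + η))).toReal with hc
  have hcpos : 0 < c := ENNReal.toReal_pos hcη (measure_ne_top μ _)
  -- H t → 0
  have hH : Tendsto (fun t => ∫ b in Iio (0:ℝ), Real.exp (t * η * b) ∂μ) atTop
      (nhds (0:ℝ)) := by
    have h0 : Tendsto (fun t => ∫ b in Iio (0:ℝ), Real.exp (t * η * b) ∂μ) atTop
        (nhds (∫ b in Iio (0:ℝ), (0:ℝ) ∂μ)) := by
      apply tendsto_integral_filter_of_dominated_convergence (fun _ => (1:ℝ))
      · apply Eventually.of_forall
        intro t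
        exact (Real.continuous_exp.comp ((continuous_const.mul continuous_id))).aestronglyMeasurable
      · filter_upwards [eventually_ge_atTop (0:ℝ)] with t ht
        rw [ae_restrict_iff' measurableSet_Iio]
        apply ae_of_all
        intro b hb
        simp only [mem_Iio] at hb
        rw [Real.norm_eq_abs, abs_of_nonneg (Real.exp_nonneg _)]
        apply Real.exp_le_one_iff.2
        have h6 : (0:ℝ) ≤ t * η := mul_nonneg ht hη.le
        nlinarith [mul_nonneg h6 (neg_nonneg.2 hb.le)]
      · exact integrable_const 1
      · rw [ae_restrict_iff' measurableSet_Iio]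
        apply ae_of_all
        intro b hb
        simp only [mem_Iio] at hb
        have hb' : η * b < 0 := mul_neg_of_pos_of_neg hη hb
        have h1 : Tendsto (fun t : ℝ => t * (η * b)) atTop atBot :=
          Tendsto.atTop_mul_const_of_neg hb' tendsto_id
        have h2 := Real.tendsto_exp_atBot.comp h1
        exact h2.congr (fun t => show Real.exp (t * (η * b)) = Real.exp (t * η * b) by
          rw [mul_assoc])
    simpa using h0
  have hev : ∀ᶠ t in atTop, (∫ b in Iio (0:ℝ), Real.exp (t * η * b) ∂μ) < c * ((1 - p) / p) := by
    apply hH.eventually_lt_const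
    exact mul_pos hcpos (div_pos (by linarith) hp0)
  obtain ⟨T0, hT0⟩ := hev.exists_forall_of_atTop
  refine ⟨max T0 1, le_max_right _ _, ?_⟩
  intro t ht
  have ht1 : (1:ℝ) ≤ t := le_trans (le_max_right T0 1) ht
  have ht0 : (0:ℝ) < t := lt_of_lt_of_le zero_lt_one ht1
  by_contra hcon
  push_neg at hcon
  -- so x t > (r + η) * t
  obtain ⟨hAp, hAm⟩ := hZ t ht1
  have hint := integrable_W μ (x t) ht0
  -- Am ≤ H t
  have h1 : (∫ b in Iio (0:ℝ), Real.exp (b * x t - b ^ 2 * t / 2) ∂μ) ≤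
      (∫ b in Iio (0:ℝ), Real.exp (t * η * b) ∂μ) := by
    apply setIntegral_mono_on hint.integrableOn
    · apply intOn_of_bound μ (by continuity) measurableSet_Iio 1
      intro b hb
      simp only [mem_Iio] at hb
      rw [abs_of_nonneg (Real.exp_nonneg _)]
      apply Real.exp_le_one_iff.2
      have h6 : (0:ℝ) ≤ t * η := mul_nonneg ht0.le hη.le
      nlinarith [mul_nonneg h6 (neg_nonneg.2 hb.le)]
    · exact measurableSet_Iio
    · intro b hb
      simp only [mem_Iio] at hb
      apply Real.exp_le_exp.2
      have h2 : b * x t ≤ b * ((r + η) * t) := by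
        apply mul_le_mul_of_nonpos_left hcon.le hb.le
      have h7 : 0 ≤ t * (r * (-b)) := mul_nonneg ht0.le (mul_nonneg hr0 (neg_nonneg.2 hb.le))
      nlinarith [mul_nonneg (sq_nonneg b) ht0.le]
  -- c ≤ Ap
  have h2 : c ≤ (∫ b in Ici (0:ℝ), Real.exp (b * x t - b ^ 2 * t / 2) ∂μ) := by
    have h3 : c = ∫ b in Ico r (r + η), (1:ℝ) ∂μ := by
      rw [setIntegral_const]; simp [hc, Measure.real]
    rw [h3]
    have h4 : (∫ b in Ico r (r + η), (1:ℝ) ∂μ) ≤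
        (∫ b in Ico r (r + η), Real.exp (b * x t - b ^ 2 * t / 2) ∂μ) := by
      apply setIntegral_mono_on ((integrable_const _).integrableOn)
        hint.integrableOn measurableSet_Ico
      intro b hb
      simp only [mem_Ico] at hb
      rw [← Real.exp_zero]
      apply Real.exp_le_exp.2
      have hb0 : 0 ≤ b := le_trans hr0 hb.1
      have h5 : b * ((r + η) * t) ≤ b * x t := by
        apply mul_le_mul_of_nonneg_left hcon.le hb0
      have h6 : 0 ≤ b * t * ((r + η) - b / 2) :=
        mul_nonneg (mul_nonneg hb0 ht0.le) (by linarith [hb.2])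
      nlinarith
    refine le_trans h4 (setIntegral_mono_set hint.integrableOn ?_ ?_)
    · apply ae_of_all; intro b; exact Real.exp_nonneg _
    · apply HasSubset.Subset.eventuallyLE
      intro b hb
      exact le_trans hr0 hb.1
  -- contradiction
  have hZpos : 0 < (∫ b, Real.exp (b * x t - b ^ 2 * t / 2) ∂μ) := integral_exp_pos hint
  have hHt := hT0 t (le_trans (le_max_left T0 1) ht)
  have key : (1 - p) * (∫ b, Real.exp (b * x t - b ^ 2 * t / 2) ∂μ) <
      c * ((1 - p) / p) := lt_of_le_of_lt (by rw [← hAm]; exact h1) hHt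
  have key2 : c * ((1 - p) / p) ≤
      (∫ b in Ici (0:ℝ), Real.exp (b * x t - b ^ 2 * t / 2) ∂μ) * ((1 - p) / p) := by
    exact mul_le_mul_of_nonneg_right h2 (div_nonneg (by linarith) hp0.le)
  rw [hAp] at key2
  have : (0:ℝ) < 1 - p := by linarith
  have heq : p * (∫ b, Real.exp (b * x t - b ^ 2 * t / 2) ∂μ) * ((1 - p) / p) =
      (1 - p) * (∫ b, Real.exp (b * x t - b ^ 2 * t / 2) ∂μ) := by
    generalize (∫ b, Real.exp (b * x t - b ^ 2 * t / 2) ∂μ) = Z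
    rw [show p * Z * ((1 - p) / p) = (1 - p) * Z * (p / p) by ring, div_self hp0.ne', mul_one]
  rw [heq] at key2
  linarith

/-- Step A-: eventually the drift `x t / t` is at least `l - η`. -/
lemma stepA_minus (μ : Measure ℝ) [IsProbabilityMeasure μ] {p l η : ℝ}
    (hp : p ∈ Set.Ioo (0:ℝ) 1) (hl0 : l ≤ 0) (hη : 0 < η)
    (hcη : μ (Ioc (l - η) l ∩ Iio 0) ≠ 0) (x : ℝ → ℝ)
    (hZ : ∀ t ≥ (1:ℝ),
      (∫ b in Ici (0:ℝ), Real.exp (b * x t - b ^ 2 * t / 2) ∂μ) =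
        p * (∫ b, Real.exp (b * x t - b ^ 2 * t / 2) ∂μ) ∧
      (∫ b in Iio (0:ℝ), Real.exp (b * x t - b ^ 2 * t / 2) ∂μ) =
        (1 - p) * (∫ b, Real.exp (b * x t - b ^ 2 * t / 2) ∂μ)) :
    ∃ T ≥ (1:ℝ), ∀ t ≥ T, (l - η) * t ≤ x t := by
  obtain ⟨hp0, hp1⟩ := hp
  -- find β > 0 with positive mass on S'' = Ioc (l-η) l ∩ Iio 0 ∩ Iic (-β)
  have hβ : ∃ n : ℕ, μ (Ioc (l - η) l ∩ Iio 0 ∩ Iic (-(1/(n+1)))) ≠ 0 := by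
    by_contra hc2
    push_neg at hc2
    apply hcη
    apply measure_mono_null _ (measure_iUnion_null_iff.2 hc2)
    intro b hb
    obtain ⟨n, hn⟩ := exists_nat_one_div_lt (show (0:ℝ) < -b from neg_pos.2 (mem_Iio.1 hb.2))
    exact mem_iUnion.2 ⟨n, hb, by simp only [mem_Iic]; linarith⟩
  obtain ⟨n, hn⟩ := hβ
  set β : ℝ := 1/(n+1) with hβdef
  have hβpos : (0:ℝ) < β := by positivity
  set S : Set ℝ := Ioc (l - η) l ∩ Iio 0 ∩ Iic (-β) with hSdef
  have hSmeas : MeasurableSet S :=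
    ((measurableSet_Ioc.inter measurableSet_Iio).inter measurableSet_Iic)
  set c : ℝ := (μ S).toReal with hc
  have hcpos : 0 < c := ENNReal.toReal_pos hn (measure_ne_top μ _)
  -- exp (t β²/2) * c → ∞, eventually > (1-p)/p
  have hexpinf : Tendsto (fun t : ℝ => Real.exp (t * β ^ 2 / 2) * c) atTop atTop := by
    apply Tendsto.atTop_mul_const hcpos
    have h1 : Tendsto (fun t : ℝ => t * (β ^ 2 / 2)) atTop atTop :=
      Tendsto.atTop_mul_const (by positivity) tendsto_id
    exact (Real.tendsto_exp_atTop.comp h1).congr (fun t => by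
      simp only [Function.comp_apply, mul_div_assoc])
  have hev := hexpinf.eventually_gt_atTop ((1 - p) / p)
  obtain ⟨T0, hT0⟩ := hev.exists_forall_of_atTop
  refine ⟨max T0 1, le_max_right _ _, ?_⟩
  intro t ht
  have ht1 : (1:ℝ) ≤ t := le_trans (le_max_right T0 1) ht
  have ht0 : (0:ℝ) < t := lt_of_lt_of_le zero_lt_one ht1
  by_contra hcon
  push_neg at hcon
  -- so x t < (l - η) * t
  obtain ⟨hAp, hAm⟩ := hZ t ht1
  have hint := integrable_W μ (x t) ht0
  -- Ap ≤ 1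
  have h1 : (∫ b in Ici (0:ℝ), Real.exp (b * x t - b ^ 2 * t / 2) ∂μ) ≤ 1 := by
    have h2 : (∫ b in Ici (0:ℝ), Real.exp (b * x t - b ^ 2 * t / 2) ∂μ) ≤
        (∫ b in Ici (0:ℝ), (1:ℝ) ∂μ) := by
      apply setIntegral_mono_on hint.integrableOn
        ((integrable_const _).integrableOn) measurableSet_Ici
      intro b hb
      simp only [mem_Ici] at hb
      rw [← Real.exp_zero]
      apply Real.exp_le_exp.2
      have hx0 : x t < 0 := lt_of_lt_of_le hcon (by nlinarith)
      nlinarith [mul_nonneg hb (neg_nonneg.2 hx0.le), sq_nonneg b, ht0.le]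
    refine le_trans h2 ?_
    rw [setIntegral_const]
    simp only [smul_eq_mul, mul_one]
    exact le_trans (ENNReal.toReal_mono ENNReal.one_ne_top prob_le_one) (by norm_num)
  -- exp(t β²/2) * c ≤ Am
  have h2 : Real.exp (t * β ^ 2 / 2) * c ≤
      (∫ b in Iio (0:ℝ), Real.exp (b * x t - b ^ 2 * t / 2) ∂μ) := by
    have h3 : Real.exp (t * β ^ 2 / 2) * c = ∫ b in S, Real.exp (t * β ^ 2 / 2) ∂μ := by
      rw [setIntegral_const]; simp [hc, Measure.real] <;> ring
    rw [h3]
    have h4 : (∫ b in S, Real.exp (t * β ^ 2 / 2) ∂μ) ≤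
        (∫ b in S, Real.exp (b * x t - b ^ 2 * t / 2) ∂μ) := by
      apply setIntegral_mono_on ((integrable_const _).integrableOn)
        hint.integrableOn hSmeas
      intro b hb
      obtain ⟨⟨hb1, hb2⟩, hb3⟩ := hb
      simp only [mem_Ioc] at hb1
      simp only [mem_Iio] at hb2
      simp only [mem_Iic] at hb3
      apply Real.exp_le_exp.2
      -- b x t - b² t/2 ≥ t b²/2 ≥ t β²/2
      have e1 : b * ((l - η) * t) ≤ b * x t := mul_le_mul_of_nonpos_left hcon.le hb2.le
      have e2 : t * b ^ 2 ≤ b * ((l - η) * t) := by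
        nlinarith [mul_nonneg (mul_nonneg ht0.le (neg_nonneg.2 hb2.le))
          (show (0:ℝ) ≤ b - (l - η) by linarith [hb1.1])]
      have e3 : β ^ 2 ≤ b ^ 2 := by nlinarith
      nlinarith [ht0.le]
    refine le_trans h4 (setIntegral_mono_set hint.integrableOn ?_ ?_)
    · apply ae_of_all; intro b; exact Real.exp_nonneg _
    · apply HasSubset.Subset.eventuallyLE
      intro b hb
      exact hb.1.2
  have hZpos : 0 < (∫ b, Real.exp (b * x t - b ^ 2 * t / 2) ∂μ) := integral_exp_pos hint
  have hHt := hT0 t (le_trans (le_max_left T0 1) ht)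
  -- (1-p)/p < exp(..)*c ≤ Am = (1-p) Z and Ap = p Z ≤ 1 so Z ≤ 1/p, Am ≤ (1-p)/p
  have key : (1 - p) * (∫ b, Real.exp (b * x t - b ^ 2 * t / 2) ∂μ) ≤ (1 - p) / p := by
    have hZ1 : (∫ b, Real.exp (b * x t - b ^ 2 * t / 2) ∂μ) ≤ 1 / p := by
      rw [le_div_iff₀ hp0]
      calc (∫ b, Real.exp (b * x t - b ^ 2 * t / 2) ∂μ) * p
          = p * (∫ b, Real.exp (b * x t - b ^ 2 * t / 2) ∂μ) := by ring
        _ ≤ 1 := by rw [← hAp]; exact h1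
    have h1p : (0:ℝ) < 1 - p := by linarith
    calc (1 - p) * (∫ b, Real.exp (b * x t - b ^ 2 * t / 2) ∂μ)
        ≤ (1 - p) * (1 / p) := mul_le_mul_of_nonneg_left hZ1 h1p.le
      _ = (1 - p) / p := by ring
  rw [← hAm] at key
  linarith [le_trans h2 key, hHt]





lemma pre_halg {p r : ℝ} : ∀ A Z : ℝ, 0 < Z → A / Z - p * r = (A - r * (p * Z)) / Z := by
  intro A Z hZ'
  field_simp

lemma main_pos (μ : Measure ℝ) [IsProbabilityMeasure μ] {p r : ℝ}
    (hp : p ∈ Set.Ioo (0:ℝ) 1) (hr0 : 0 ≤ r)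
    (hr2 : ∀ ε' > (0:ℝ), μ (Ico r (r + ε')) ≠ 0)
    (hr3 : μ (Ico 0 r) = 0)
    (hmom : Integrable (fun b : ℝ => |b|) μ)
    (x : ℝ → ℝ)
    (hZ : ∀ t ≥ (1:ℝ),
      0 < (∫ b, Real.exp (b * x t - b ^ 2 * t / 2) ∂μ) ∧
      (∫ b in Ici (0:ℝ), Real.exp (b * x t - b ^ 2 * t / 2) ∂μ) =
        p * (∫ b, Real.exp (b * x t - b ^ 2 * t / 2) ∂μ))
    (hA : ∀ η > (0:ℝ), ∃ T ≥ (1:ℝ), ∀ t ≥ T, x t ≤ (r + η) * t) :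
    Tendsto (fun t => (∫ b in Ici (0:ℝ), b * Real.exp (b * x t - b ^ 2 * t / 2) ∂μ) /
      (∫ b, Real.exp (b * x t - b ^ 2 * t / 2) ∂μ)) atTop (nhds (p * r)) := by
  obtain ⟨hp0, hp1⟩ := hp
  rw [Metric.tendsto_atTop]
  intro ε' hε'
  set δ : ℝ := ε' / 4 with hδdef
  have hδ : 0 < δ := by positivity
  set η : ℝ := δ / 4 with hηdef
  have hη : 0 < η := by positivity
  set c : ℝ := (μ (Ico r (r + η))).toReal with hcdef
  have hcpos : 0 < c := ENNReal.toReal_pos (hr2 η hη) (measure_ne_top μ _)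
  obtain ⟨T₁, hT₁1, hT₁⟩ := hA η hη
  -- the tail integral tends to zero
  have hI : Tendsto (fun t => ∫ b in Ioi (r + δ),
      (b - r) * Real.exp (-(t * (b - r) ^ 2 / 8)) ∂μ) atTop (nhds 0) := by
    have h0 : Tendsto (fun t => ∫ b in Ioi (r + δ),
        (b - r) * Real.exp (-(t * (b - r) ^ 2 / 8)) ∂μ) atTop
        (nhds (∫ b in Ioi (r + δ), (0:ℝ) ∂μ)) := by
      apply tendsto_integral_filter_of_dominated_convergence (fun b => |b| + |r|)
      · apply Eventually.of_forall
        intro t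
        apply Continuous.aestronglyMeasurable
        exact (continuous_id.sub continuous_const).mul
          (Real.continuous_exp.comp ((continuous_const.mul ((continuous_id.sub continuous_const).pow 2)).div_const 8).neg)
      · filter_upwards [eventually_ge_atTop (0:ℝ)] with t ht
        rw [ae_restrict_iff' measurableSet_Ioi]
        apply ae_of_all
        intro b hb
        simp only [mem_Ioi] at hb
        rw [Real.norm_eq_abs, abs_mul, abs_of_nonneg (Real.exp_nonneg _)]
        have h1 : Real.exp (-(t * (b - r) ^ 2 / 8)) ≤ 1 := by
          apply Real.exp_le_one_iff.2
          have : 0 ≤ t * (b - r) ^ 2 / 8 := by positivity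
          linarith
        calc |b - r| * Real.exp (-(t * (b - r) ^ 2 / 8)) ≤ |b - r| * 1 :=
              mul_le_mul_of_nonneg_left h1 (abs_nonneg _)
          _ ≤ |b| + |r| := by rw [mul_one]; exact (abs_sub _ _)
      · exact (hmom.add (integrable_const |r|)).restrict
      · rw [ae_restrict_iff' measurableSet_Ioi]
        apply ae_of_all
        intro b hb
        simp only [mem_Ioi] at hb
        have hbr : (0:ℝ) < (b - r) ^ 2 / 8 := by
          have : 0 < b - r := by linarith
          positivity
        have h1 : Tendsto (fun t : ℝ => t * (-((b - r) ^ 2 / 8))) atTop atBot :=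
          Tendsto.atTop_mul_const_of_neg (by linarith) tendsto_id
        have h2 := (Real.tendsto_exp_atBot.comp h1).const_mul (b - r)
        rw [mul_zero] at h2
        exact h2.congr (fun t => by
          simp only [Function.comp_apply]
          rw [show t * -((b - r) ^ 2 / 8) = -(t * (b - r) ^ 2 / 8) by ring])
    simpa using h0
  have hev : ∀ᶠ t in atTop, (∫ b in Ioi (r + δ),
      (b - r) * Real.exp (-(t * (b - r) ^ 2 / 8)) ∂μ) < c * (ε' / 2) :=
    hI.eventually_lt_const (by positivity)
  obtain ⟨T₂, hT₂⟩ := hev.exists_forall_of_atTop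
  refine ⟨max (max T₁ T₂) 1, ?_⟩
  intro t ht
  have ht1 : (1:ℝ) ≤ t := le_trans (le_max_right _ 1) ht
  have ht0 : (0:ℝ) < t := lt_of_lt_of_le zero_lt_one ht1
  have hxt : x t ≤ (r + η) * t := hT₁ t (le_trans (le_trans (le_max_left T₁ T₂) (le_max_left _ 1)) ht)
  have hIt : (∫ b in Ioi (r + δ), (b - r) * Real.exp (-(t * (b - r) ^ 2 / 8)) ∂μ) <
      c * (ε' / 2) := hT₂ t (le_trans (le_trans (le_max_right T₁ T₂) (le_max_left _ 1)) ht)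
  obtain ⟨hZpos, hAp⟩ := hZ t ht1
  have hint := integrable_W μ (x t) ht0
  have hbint := integrable_bW μ (x t) ht0
  have hbrint : Integrable (fun b => (b - r) * Real.exp (b * x t - b ^ 2 * t / 2)) μ := by
    have := hbint.sub (hint.const_mul r)
    exact this.congr (ae_of_all _ (fun b => by simp; ring))
  -- a.e. r ≤ b on Ici 0
  have hae : ∀ᵐ b ∂μ, b ∈ Ici (0:ℝ) → r ≤ b := by
    rw [ae_iff]
    apply measure_mono_null _ hr3
    intro b hb
    simp only [mem_setOf_eq, not_forall] at hb
    push_neg at hb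
    exact ⟨hb.1, by linarith [hb.2]⟩
  -- E := ∫_{Ici 0} (b - r) W
  set E : ℝ := ∫ b in Ici (0:ℝ), (b - r) * Real.exp (b * x t - b ^ 2 * t / 2) ∂μ with hEdef
  have hE0 : 0 ≤ E := by
    apply setIntegral_nonneg_of_ae_restrict
    rw [EventuallyLE, ae_restrict_iff' measurableSet_Ici]
    filter_upwards [hae] with b hb hb0
    have := hb hb0
    have hw := Real.exp_nonneg (b * x t - b ^ 2 * t / 2)
    simp only [Pi.zero_apply]
    nlinarith
  -- E = Num - r * Ap
  have hEeq : E = (∫ b in Ici (0:ℝ), b * Real.exp (b * x t - b ^ 2 * t / 2) ∂μ) -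
      r * (∫ b in Ici (0:ℝ), Real.exp (b * x t - b ^ 2 * t / 2) ∂μ) := by
    rw [hEdef, ← integral_const_mul]
    rw [← integral_sub hbint.integrableOn (hint.integrableOn.const_mul r)]
    apply integral_congr_ae
    apply ae_of_all
    intro b
    ring
  -- split E
  have hsplitset : Ici (0:ℝ) = (Ici (0:ℝ) ∩ Iic (r + δ)) ∪ (Ici (0:ℝ) ∩ Ioi (r + δ)) := by
    ext b
    simp only [mem_union, mem_inter_iff, mem_Ici, mem_Iic, mem_Ioi]
    constructor
    · intro h; rcases le_or_gt b (r + δ) with h2 | h2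
      · exact Or.inl ⟨h, h2⟩
      · exact Or.inr ⟨h, h2⟩
    · rintro (⟨h, _⟩ | ⟨h, _⟩) <;> exact h
  have hEsplit : E = (∫ b in Ici (0:ℝ) ∩ Iic (r + δ),
        (b - r) * Real.exp (b * x t - b ^ 2 * t / 2) ∂μ) +
      (∫ b in Ici (0:ℝ) ∩ Ioi (r + δ),
        (b - r) * Real.exp (b * x t - b ^ 2 * t / 2) ∂μ) := by
    rw [hEdef]
    conv_lhs => rw [hsplitset]
    apply setIntegral_union
    · rw [Set.disjoint_left]
      rintro b ⟨_, h1⟩ ⟨_, h2⟩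
      simp only [mem_Iic] at h1
      simp only [mem_Ioi] at h2
      linarith
    · exact measurableSet_Ici.inter measurableSet_Ioi
    · exact hbrint.integrableOn
    · exact hbrint.integrableOn
  -- first piece ≤ δ * Ap
  have hfirst : (∫ b in Ici (0:ℝ) ∩ Iic (r + δ),
      (b - r) * Real.exp (b * x t - b ^ 2 * t / 2) ∂μ) ≤
      δ * (∫ b in Ici (0:ℝ), Real.exp (b * x t - b ^ 2 * t / 2) ∂μ) := by
    have h1 : (∫ b in Ici (0:ℝ) ∩ Iic (r + δ),
        (b - r) * Real.exp (b * x t - b ^ 2 * t / 2) ∂μ) ≤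
        (∫ b in Ici (0:ℝ) ∩ Iic (r + δ),
        δ * Real.exp (b * x t - b ^ 2 * t / 2) ∂μ) := by
      apply setIntegral_mono_on hbrint.integrableOn ((hint.const_mul δ).integrableOn)
        (measurableSet_Ici.inter measurableSet_Iic)
      intro b hb
      have hb2 : b ≤ r + δ := hb.2
      have hw := Real.exp_nonneg (b * x t - b ^ 2 * t / 2)
      nlinarith
    refine le_trans h1 ?_
    rw [integral_const_mul]
    apply mul_le_mul_of_nonneg_left _ hδ.le
    apply setIntegral_mono_set hint.integrableOn
      (ae_of_all _ (fun b => Real.exp_nonneg _))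
      (HasSubset.Subset.eventuallyLE inter_subset_left)
  -- second piece ≤ Ttail
  have hsecond : (∫ b in Ici (0:ℝ) ∩ Ioi (r + δ),
      (b - r) * Real.exp (b * x t - b ^ 2 * t / 2) ∂μ) ≤
      (∫ b in Ioi (r + δ), (b - r) * Real.exp (b * x t - b ^ 2 * t / 2) ∂μ) := by
    apply setIntegral_mono_set hbrint.integrableOn
    · rw [EventuallyLE, ae_restrict_iff' measurableSet_Ioi]
      apply ae_of_all
      intro b hb
      simp only [mem_Ioi] at hb
      have hw := Real.exp_nonneg (b * x t - b ^ 2 * t / 2)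
      simp only [Pi.zero_apply]
      nlinarith [hδ, hr0]
    · exact HasSubset.Subset.eventuallyLE inter_subset_right
  -- pointwise tail bound
  set D : ℝ := ∫ b in Ico r (r + η), Real.exp (b * x t - b ^ 2 * t / 2) ∂μ with hDdef
  have hDZ : D ≤ (∫ b in Ici (0:ℝ), Real.exp (b * x t - b ^ 2 * t / 2) ∂μ) := by
    apply setIntegral_mono_set hint.integrableOn
      (ae_of_all _ (fun b => Real.exp_nonneg _))
    apply HasSubset.Subset.eventuallyLE
    intro b hb
    exact le_trans hr0 hb.1
  have hptwise : ∀ b ∈ Ioi (r + δ), Real.exp (b * x t - b ^ 2 * t / 2) ≤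
      (D / c) * Real.exp (-(t * (b - r) ^ 2 / 8)) := by
    intro b hb
    simp only [mem_Ioi] at hb
    have hkey : ∀ b' ∈ Ico r (r + η),
        Real.exp (b * x t - b ^ 2 * t / 2) * Real.exp (t * (b - r) ^ 2 / 8) ≤
        Real.exp (b' * x t - b' ^ 2 * t / 2) := by
      intro b' hb'
      obtain ⟨hb'1, hb'2⟩ := hb'
      rw [← Real.exp_add]
      apply Real.exp_le_exp.2
      have hη4 : η ≤ (b - r) / 4 := by
        rw [hηdef, hδdef]
        linarith
      have h1 : 3 * (b - r) / 4 ≤ b - b' := by linarith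
      have h2 : (b - r) / 4 ≤ (b + b') / 2 - (r + η) := by linarith
      have h3 : (3 * (b - r) / 4) * ((b - r) / 4) ≤ (b - b') * ((b + b') / 2 - (r + η)) := by
        apply mul_le_mul h1 h2 (by linarith) (by linarith)
      have q1 : (0:ℝ) ≤ (b - b') * ((b + b') / 2 - (r + η)) - (b - r) ^ 2 / 8 := by
        nlinarith [h3, sq_nonneg (b - r)]
      have hx' : ((r + η) * t) * (b' - b) ≤ x t * (b' - b) :=
        mul_le_mul_of_nonpos_right hxt (by linarith)
      nlinarith [mul_nonneg ht0.le q1]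
    have hDbound : (Real.exp (b * x t - b ^ 2 * t / 2) * Real.exp (t * (b - r) ^ 2 / 8)) * c ≤ D := by
      have h4 : (∫ _ in Ico r (r + η),
          Real.exp (b * x t - b ^ 2 * t / 2) * Real.exp (t * (b - r) ^ 2 / 8) ∂μ) ≤ D := by
        rw [hDdef]
        apply setIntegral_mono_on
          ((integrable_const _).integrableOn)
          hint.integrableOn measurableSet_Ico hkey
      rw [setIntegral_const] at h4
      simp only [smul_eq_mul] at h4
      calc (Real.exp (b * x t - b ^ 2 * t / 2) * Real.exp (t * (b - r) ^ 2 / 8)) * c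
          = c * (Real.exp (b * x t - b ^ 2 * t / 2) * Real.exp (t * (b - r) ^ 2 / 8)) := by ring
        _ ≤ D := h4
    have h5 : Real.exp (b * x t - b ^ 2 * t / 2) * Real.exp (t * (b - r) ^ 2 / 8) ≤ D / c := by
      rw [le_div_iff₀ hcpos]
      exact hDbound
    calc Real.exp (b * x t - b ^ 2 * t / 2)
        = (Real.exp (b * x t - b ^ 2 * t / 2) * Real.exp (t * (b - r) ^ 2 / 8)) *
          Real.exp (-(t * (b - r) ^ 2 / 8)) := by
          rw [mul_assoc, ← Real.exp_add]
          simp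
      _ ≤ (D / c) * Real.exp (-(t * (b - r) ^ 2 / 8)) :=
          mul_le_mul_of_nonneg_right h5 (Real.exp_nonneg _)
  -- Ttail ≤ (D/c) * I t
  have htail : (∫ b in Ioi (r + δ), (b - r) * Real.exp (b * x t - b ^ 2 * t / 2) ∂μ) ≤
      (D / c) * (∫ b in Ioi (r + δ), (b - r) * Real.exp (-(t * (b - r) ^ 2 / 8)) ∂μ) := by
    have h1 : (∫ b in Ioi (r + δ), (b - r) * Real.exp (b * x t - b ^ 2 * t / 2) ∂μ) ≤
        (∫ b in Ioi (r + δ), (D / c) * ((b - r) * Real.exp (-(t * (b - r) ^ 2 / 8))) ∂μ) := by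
      apply setIntegral_mono_on hbrint.integrableOn
      · apply Integrable.integrableOn
        apply Integrable.const_mul
        apply Integrable.mono' (hmom.add (integrable_const |r|))
        · apply Continuous.aestronglyMeasurable
          exact (continuous_id.sub continuous_const).mul
            (Real.continuous_exp.comp ((continuous_const.mul ((continuous_id.sub continuous_const).pow 2)).div_const 8).neg)
        · apply ae_of_all
          intro b
          rw [Real.norm_eq_abs, abs_mul, abs_of_nonneg (Real.exp_nonneg _)]
          have h2 : Real.exp (-(t * (b - r) ^ 2 / 8)) ≤ 1 := by
            apply Real.exp_le_one_iff.2
            have : 0 ≤ t * (b - r) ^ 2 / 8 := by positivity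
            linarith
          calc |b - r| * Real.exp (-(t * (b - r) ^ 2 / 8)) ≤ |b - r| * 1 :=
              mul_le_mul_of_nonneg_left h2 (abs_nonneg _)
            _ ≤ |b| + |r| := by rw [mul_one]; exact abs_sub _ _
      · exact measurableSet_Ioi
      · intro b hb
        simp only [mem_Ioi] at hb
        have h3 := hptwise b (by simp only [mem_Ioi]; exact hb)
        have hbr : 0 ≤ b - r := by linarith
        calc (b - r) * Real.exp (b * x t - b ^ 2 * t / 2)
            ≤ (b - r) * ((D / c) * Real.exp (-(t * (b - r) ^ 2 / 8))) :=
              mul_le_mul_of_nonneg_left h3 hbr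
          _ = (D / c) * ((b - r) * Real.exp (-(t * (b - r) ^ 2 / 8))) := by ring
    rw [integral_const_mul] at h1
    exact h1
  -- combine
  have hI0 : 0 ≤ (∫ b in Ioi (r + δ), (b - r) * Real.exp (-(t * (b - r) ^ 2 / 8)) ∂μ) := by
    apply setIntegral_nonneg_of_ae_restrict
    rw [EventuallyLE, ae_restrict_iff' measurableSet_Ioi]
    apply ae_of_all
    intro b hb
    simp only [mem_Ioi] at hb
    have := Real.exp_nonneg (-(t * (b - r) ^ 2 / 8))
    simp only [Pi.zero_apply]
    nlinarith
  have hApZ : (∫ b in Ici (0:ℝ), Real.exp (b * x t - b ^ 2 * t / 2) ∂μ) ≤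
      (∫ b, Real.exp (b * x t - b ^ 2 * t / 2) ∂μ) := by
    rw [hAp]
    nlinarith [mul_nonneg (show (0:ℝ) ≤ 1 - p by linarith) hZpos.le]
  have hEfinal : E ≤ (∫ b, Real.exp (b * x t - b ^ 2 * t / 2) ∂μ) * (δ * p + (∫ b in Ioi (r + δ), (b - r) * Real.exp (-(t * (b - r) ^ 2 / 8)) ∂μ) / c) := by
    have hDZ' : D ≤ (∫ b, Real.exp (b * x t - b ^ 2 * t / 2) ∂μ) := le_trans hDZ hApZ
    have h6 : (D / c) * (∫ b in Ioi (r + δ), (b - r) * Real.exp (-(t * (b - r) ^ 2 / 8)) ∂μ) ≤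
        ((∫ b, Real.exp (b * x t - b ^ 2 * t / 2) ∂μ) / c) * (∫ b in Ioi (r + δ), (b - r) * Real.exp (-(t * (b - r) ^ 2 / 8)) ∂μ) := by
      apply mul_le_mul_of_nonneg_right _ hI0
      exact (div_le_div_iff_of_pos_right hcpos).2 hDZ'
    have h7 := le_trans (le_trans hsecond htail) h6
    rw [hEsplit]
    rw [hAp] at hfirst
    calc (∫ b in Ici (0:ℝ) ∩ Iic (r + δ), (b - r) * Real.exp (b * x t - b ^ 2 * t / 2) ∂μ) +
        (∫ b in Ici (0:ℝ) ∩ Ioi (r + δ), (b - r) * Real.exp (b * x t - b ^ 2 * t / 2) ∂μ)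
        ≤ δ * (p * (∫ b, Real.exp (b * x t - b ^ 2 * t / 2) ∂μ)) +
          ((∫ b, Real.exp (b * x t - b ^ 2 * t / 2) ∂μ) / c) *
            (∫ b in Ioi (r + δ), (b - r) * Real.exp (-(t * (b - r) ^ 2 / 8)) ∂μ) :=
          add_le_add hfirst h7
      _ = (∫ b, Real.exp (b * x t - b ^ 2 * t / 2) ∂μ) *
          (δ * p + (∫ b in Ioi (r + δ), (b - r) * Real.exp (-(t * (b - r) ^ 2 / 8)) ∂μ) / c) := by
          ring
  -- conclude
  rw [Real.dist_eq]
  have hnum : (∫ b in Ici (0:ℝ), b * Real.exp (b * x t - b ^ 2 * t / 2) ∂μ) /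
      (∫ b, Real.exp (b * x t - b ^ 2 * t / 2) ∂μ) - p * r =
      E / (∫ b, Real.exp (b * x t - b ^ 2 * t / 2) ∂μ) := by
    rw [hEeq, hAp]
    exact pre_halg _ _ hZpos
  rw [hnum, abs_of_nonneg (div_nonneg hE0 hZpos.le)]
  rw [div_lt_iff₀ hZpos]
  calc E ≤ (∫ b, Real.exp (b * x t - b ^ 2 * t / 2) ∂μ) *
      (δ * p + (∫ b in Ioi (r + δ), (b - r) * Real.exp (-(t * (b - r) ^ 2 / 8)) ∂μ) / c) := hEfinal
    _ < ε' * (∫ b, Real.exp (b * x t - b ^ 2 * t / 2) ∂μ) := by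
      have h8 : (∫ b in Ioi (r + δ), (b - r) * Real.exp (-(t * (b - r) ^ 2 / 8)) ∂μ) / c < ε' / 2 := by
        rw [div_lt_iff₀ hcpos]
        calc (∫ b in Ioi (r + δ), (b - r) * Real.exp (-(t * (b - r) ^ 2 / 8)) ∂μ) <
            c * (ε' / 2) := hIt
          _ = ε' / 2 * c := by ring
      have h9 : δ * p + (∫ b in Ioi (r + δ), (b - r) * Real.exp (-(t * (b - r) ^ 2 / 8)) ∂μ) / c < ε' := by
        have : δ * p ≤ δ := by nlinarith
        rw [hδdef] at this ⊢
        linarith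
      nlinarith





lemma pre_halg_neg {p l : ℝ} : ∀ A Z : ℝ, 0 < Z → A / Z - (1 - p) * l = -((l * ((1 - p) * Z) - A) / Z) := by
  intro A Z hZ'
  field_simp
  ring

lemma main_neg (μ : Measure ℝ) [IsProbabilityMeasure μ] {p l : ℝ}
    (hp : p ∈ Set.Ioo (0:ℝ) 1) (hl0 : l ≤ 0)
    (hl2 : ∀ ε' > (0:ℝ), μ (Ioc (l - ε') l ∩ Iio 0) ≠ 0)
    (hl3 : μ (Ioo l 0) = 0)
    (hmom : Integrable (fun b : ℝ => |b|) μ)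
    (x : ℝ → ℝ)
    (hZ : ∀ t ≥ (1:ℝ),
      0 < (∫ b, Real.exp (b * x t - b ^ 2 * t / 2) ∂μ) ∧
      (∫ b in Iio (0:ℝ), Real.exp (b * x t - b ^ 2 * t / 2) ∂μ) =
        (1 - p) * (∫ b, Real.exp (b * x t - b ^ 2 * t / 2) ∂μ))
    (hA : ∀ η > (0:ℝ), ∃ T ≥ (1:ℝ), ∀ t ≥ T, (l - η) * t ≤ x t) :
    Tendsto (fun t => (∫ b in Iio (0:ℝ), b * Real.exp (b * x t - b ^ 2 * t / 2) ∂μ) /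
      (∫ b, Real.exp (b * x t - b ^ 2 * t / 2) ∂μ)) atTop (nhds ((1 - p) * l)) := by
  obtain ⟨hp0, hp1⟩ := hp
  rw [Metric.tendsto_atTop]
  intro ε' hε'
  set δ : ℝ := ε' / 4 with hδdef
  have hδ : 0 < δ := by positivity
  set η : ℝ := δ / 4 with hηdef
  have hη : 0 < η := by positivity
  set S : Set ℝ := Ioc (l - η) l ∩ Iio 0 with hSdef
  have hSmeas : MeasurableSet S := (measurableSet_Ioc.inter measurableSet_Iio)
  set c : ℝ := (μ S).toReal with hcdef
  have hcpos : 0 < c := ENNReal.toReal_pos (hl2 η hη) (measure_ne_top μ _)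
  obtain ⟨T₁, hT₁1, hT₁⟩ := hA η hη
  have hI : Tendsto (fun t => ∫ b in Iio (l - δ),
      (l - b) * Real.exp (-(t * (l - b) ^ 2 / 8)) ∂μ) atTop (nhds 0) := by
    have h0 : Tendsto (fun t => ∫ b in Iio (l - δ),
        (l - b) * Real.exp (-(t * (l - b) ^ 2 / 8)) ∂μ) atTop
        (nhds (∫ b in Iio (l - δ), (0:ℝ) ∂μ)) := by
      apply tendsto_integral_filter_of_dominated_convergence (fun b => |l| + |b|)
      · apply Eventually.of_forall
        intro t
        apply Continuous.aestronglyMeasurable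
        exact (continuous_const.sub continuous_id).mul
          (Real.continuous_exp.comp ((continuous_const.mul ((continuous_const.sub continuous_id).pow 2)).div_const 8).neg)
      · filter_upwards [eventually_ge_atTop (0:ℝ)] with t ht
        rw [ae_restrict_iff' measurableSet_Iio]
        apply ae_of_all
        intro b hb
        simp only [mem_Iio] at hb
        rw [Real.norm_eq_abs, abs_mul, abs_of_nonneg (Real.exp_nonneg _)]
        have h1 : Real.exp (-(t * (l - b) ^ 2 / 8)) ≤ 1 := by
          apply Real.exp_le_one_iff.2
          have : 0 ≤ t * (l - b) ^ 2 / 8 := by positivity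
          linarith
        calc |l - b| * Real.exp (-(t * (l - b) ^ 2 / 8)) ≤ |l - b| * 1 :=
              mul_le_mul_of_nonneg_left h1 (abs_nonneg _)
          _ ≤ |l| + |b| := by rw [mul_one]; exact (abs_sub _ _)
      · exact ((integrable_const |l|).add hmom).restrict
      · rw [ae_restrict_iff' measurableSet_Iio]
        apply ae_of_all
        intro b hb
        simp only [mem_Iio] at hb
        have hbr : (0:ℝ) < (l - b) ^ 2 / 8 := by
          have : 0 < l - b := by linarith
          positivity
        have h1 : Tendsto (fun t : ℝ => t * (-((l - b) ^ 2 / 8))) atTop atBot :=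
          Tendsto.atTop_mul_const_of_neg (by linarith) tendsto_id
        have h2 := (Real.tendsto_exp_atBot.comp h1).const_mul (l - b)
        rw [mul_zero] at h2
        exact h2.congr (fun t => by
          simp only [Function.comp_apply]
          rw [show t * -((l - b) ^ 2 / 8) = -(t * (l - b) ^ 2 / 8) by ring])
    simpa using h0
  have hev : ∀ᶠ t in atTop, (∫ b in Iio (l - δ),
      (l - b) * Real.exp (-(t * (l - b) ^ 2 / 8)) ∂μ) < c * (ε' / 2) :=
    hI.eventually_lt_const (by positivity)
  obtain ⟨T₂, hT₂⟩ := hev.exists_forall_of_atTop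
  refine ⟨max (max T₁ T₂) 1, ?_⟩
  intro t ht
  have ht1 : (1:ℝ) ≤ t := le_trans (le_max_right _ 1) ht
  have ht0 : (0:ℝ) < t := lt_of_lt_of_le zero_lt_one ht1
  have hxt : (l - η) * t ≤ x t := hT₁ t (le_trans (le_trans (le_max_left T₁ T₂) (le_max_left _ 1)) ht)
  have hIt : (∫ b in Iio (l - δ), (l - b) * Real.exp (-(t * (l - b) ^ 2 / 8)) ∂μ) <
      c * (ε' / 2) := hT₂ t (le_trans (le_trans (le_max_right T₁ T₂) (le_max_left _ 1)) ht)
  obtain ⟨hZpos, hAm⟩ := hZ t ht1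
  have hint := integrable_W μ (x t) ht0
  have hbint := integrable_bW μ (x t) ht0
  have hbrint : Integrable (fun b => (l - b) * Real.exp (b * x t - b ^ 2 * t / 2)) μ := by
    have := (hint.const_mul l).sub hbint
    exact this.congr (ae_of_all _ (fun b => by simp; ring))
  -- a.e. b ≤ l on Iio 0
  have hae : ∀ᵐ b ∂μ, b ∈ Iio (0:ℝ) → b ≤ l := by
    rw [ae_iff]
    apply measure_mono_null _ hl3
    intro b hb
    simp only [mem_setOf_eq, not_forall] at hb
    push_neg at hb
    exact ⟨by linarith [hb.2], hb.1⟩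
  set E : ℝ := ∫ b in Iio (0:ℝ), (l - b) * Real.exp (b * x t - b ^ 2 * t / 2) ∂μ with hEdef
  have hE0 : 0 ≤ E := by
    apply setIntegral_nonneg_of_ae_restrict
    rw [EventuallyLE, ae_restrict_iff' measurableSet_Iio]
    filter_upwards [hae] with b hb hb0
    have := hb hb0
    have hw := Real.exp_nonneg (b * x t - b ^ 2 * t / 2)
    simp only [Pi.zero_apply]
    nlinarith
  have hEeq : E = l * (∫ b in Iio (0:ℝ), Real.exp (b * x t - b ^ 2 * t / 2) ∂μ) -
      (∫ b in Iio (0:ℝ), b * Real.exp (b * x t - b ^ 2 * t / 2) ∂μ) := by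
    rw [hEdef, ← integral_const_mul]
    rw [← integral_sub (hint.integrableOn.const_mul l) hbint.integrableOn]
    apply integral_congr_ae
    apply ae_of_all
    intro b
    ring
  have hsplitset : Iio (0:ℝ) = (Iio (0:ℝ) ∩ Ici (l - δ)) ∪ (Iio (0:ℝ) ∩ Iio (l - δ)) := by
    ext b
    simp only [mem_union, mem_inter_iff, mem_Iio, mem_Ici]
    constructor
    · intro h; rcases le_or_gt (l - δ) b with h2 | h2
      · exact Or.inl ⟨h, h2⟩
      · exact Or.inr ⟨h, h2⟩
    · rintro (⟨h, _⟩ | ⟨h, _⟩) <;> exact h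
  have hEsplit : E = (∫ b in Iio (0:ℝ) ∩ Ici (l - δ),
        (l - b) * Real.exp (b * x t - b ^ 2 * t / 2) ∂μ) +
      (∫ b in Iio (0:ℝ) ∩ Iio (l - δ),
        (l - b) * Real.exp (b * x t - b ^ 2 * t / 2) ∂μ) := by
    rw [hEdef]
    conv_lhs => rw [hsplitset]
    apply setIntegral_union
    · rw [Set.disjoint_left]
      rintro b ⟨_, h1⟩ ⟨_, h2⟩
      simp only [mem_Ici] at h1
      simp only [mem_Iio] at h2
      linarith
    · exact measurableSet_Iio.inter measurableSet_Iio
    · exact hbrint.integrableOn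
    · exact hbrint.integrableOn
  have hfirst : (∫ b in Iio (0:ℝ) ∩ Ici (l - δ),
      (l - b) * Real.exp (b * x t - b ^ 2 * t / 2) ∂μ) ≤
      δ * (∫ b in Iio (0:ℝ), Real.exp (b * x t - b ^ 2 * t / 2) ∂μ) := by
    have h1 : (∫ b in Iio (0:ℝ) ∩ Ici (l - δ),
        (l - b) * Real.exp (b * x t - b ^ 2 * t / 2) ∂μ) ≤
        (∫ b in Iio (0:ℝ) ∩ Ici (l - δ),
        δ * Real.exp (b * x t - b ^ 2 * t / 2) ∂μ) := by
      apply setIntegral_mono_on hbrint.integrableOn ((hint.const_mul δ).integrableOn)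
        (measurableSet_Iio.inter measurableSet_Ici)
      intro b hb
      have hb2 : l - δ ≤ b := hb.2
      have hw := Real.exp_nonneg (b * x t - b ^ 2 * t / 2)
      nlinarith
    refine le_trans h1 ?_
    rw [integral_const_mul]
    apply mul_le_mul_of_nonneg_left _ hδ.le
    apply setIntegral_mono_set hint.integrableOn
      (ae_of_all _ (fun b => Real.exp_nonneg _))
      (HasSubset.Subset.eventuallyLE inter_subset_left)
  have hsecond : (∫ b in Iio (0:ℝ) ∩ Iio (l - δ),
      (l - b) * Real.exp (b * x t - b ^ 2 * t / 2) ∂μ) ≤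
      (∫ b in Iio (l - δ), (l - b) * Real.exp (b * x t - b ^ 2 * t / 2) ∂μ) := by
    apply setIntegral_mono_set hbrint.integrableOn
    · rw [EventuallyLE, ae_restrict_iff' measurableSet_Iio]
      apply ae_of_all
      intro b hb
      simp only [mem_Iio] at hb
      have hw := Real.exp_nonneg (b * x t - b ^ 2 * t / 2)
      simp only [Pi.zero_apply]
      nlinarith [hδ]
    · exact HasSubset.Subset.eventuallyLE inter_subset_right
  set D : ℝ := ∫ b in S, Real.exp (b * x t - b ^ 2 * t / 2) ∂μ with hDdef
  have hDZ : D ≤ (∫ b in Iio (0:ℝ), Real.exp (b * x t - b ^ 2 * t / 2) ∂μ) := by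
    apply setIntegral_mono_set hint.integrableOn
      (ae_of_all _ (fun b => Real.exp_nonneg _))
    exact HasSubset.Subset.eventuallyLE inter_subset_right
  have hptwise : ∀ b ∈ Iio (l - δ), Real.exp (b * x t - b ^ 2 * t / 2) ≤
      (D / c) * Real.exp (-(t * (l - b) ^ 2 / 8)) := by
    intro b hb
    simp only [mem_Iio] at hb
    have hkey : ∀ b' ∈ S,
        Real.exp (b * x t - b ^ 2 * t / 2) * Real.exp (t * (l - b) ^ 2 / 8) ≤
        Real.exp (b' * x t - b' ^ 2 * t / 2) := by
      intro b' hb'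
      obtain ⟨hb'1, hb'2⟩ := hb'
      simp only [mem_Ioc] at hb'1
      simp only [mem_Iio] at hb'2
      rw [← Real.exp_add]
      apply Real.exp_le_exp.2
      have hη4 : η ≤ (l - b) / 4 := by
        rw [hηdef, hδdef]
        rw [hδdef] at hb
        linarith
      have h1 : 3 * (l - b) / 4 ≤ b' - b := by linarith [hb'1.1]
      have h2 : (l - b) / 4 ≤ (l - η) - (b + b') / 2 := by linarith [hb'1.2]
      have h3 : (3 * (l - b) / 4) * ((l - b) / 4) ≤ (b' - b) * ((l - η) - (b + b') / 2) := by
        apply mul_le_mul h1 h2 (by linarith) (by linarith)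
      have q1 : (0:ℝ) ≤ (b' - b) * ((l - η) - (b + b') / 2) - (l - b) ^ 2 / 8 := by
        nlinarith [h3, sq_nonneg (l - b)]
      have hx' : ((l - η) * t) * (b' - b) ≤ x t * (b' - b) :=
        mul_le_mul_of_nonneg_right hxt (by linarith)
      nlinarith [mul_nonneg ht0.le q1]
    have hDbound : (Real.exp (b * x t - b ^ 2 * t / 2) * Real.exp (t * (l - b) ^ 2 / 8)) * c ≤ D := by
      have h4 : (∫ _ in S,
          Real.exp (b * x t - b ^ 2 * t / 2) * Real.exp (t * (l - b) ^ 2 / 8) ∂μ) ≤ D := by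
        rw [hDdef]
        apply setIntegral_mono_on
          ((integrable_const _).integrableOn)
          hint.integrableOn hSmeas hkey
      rw [setIntegral_const] at h4
      simp only [smul_eq_mul] at h4
      calc (Real.exp (b * x t - b ^ 2 * t / 2) * Real.exp (t * (l - b) ^ 2 / 8)) * c
          = c * (Real.exp (b * x t - b ^ 2 * t / 2) * Real.exp (t * (l - b) ^ 2 / 8)) := by ring
        _ ≤ D := h4
    have h5 : Real.exp (b * x t - b ^ 2 * t / 2) * Real.exp (t * (l - b) ^ 2 / 8) ≤ D / c := by
      rw [le_div_iff₀ hcpos]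
      exact hDbound
    calc Real.exp (b * x t - b ^ 2 * t / 2)
        = (Real.exp (b * x t - b ^ 2 * t / 2) * Real.exp (t * (l - b) ^ 2 / 8)) *
          Real.exp (-(t * (l - b) ^ 2 / 8)) := by
          rw [mul_assoc, ← Real.exp_add]
          simp
      _ ≤ (D / c) * Real.exp (-(t * (l - b) ^ 2 / 8)) :=
          mul_le_mul_of_nonneg_right h5 (Real.exp_nonneg _)
  have htail : (∫ b in Iio (l - δ), (l - b) * Real.exp (b * x t - b ^ 2 * t / 2) ∂μ) ≤
      (D / c) * (∫ b in Iio (l - δ), (l - b) * Real.exp (-(t * (l - b) ^ 2 / 8)) ∂μ) := by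
    have h1 : (∫ b in Iio (l - δ), (l - b) * Real.exp (b * x t - b ^ 2 * t / 2) ∂μ) ≤
        (∫ b in Iio (l - δ), (D / c) * ((l - b) * Real.exp (-(t * (l - b) ^ 2 / 8))) ∂μ) := by
      apply setIntegral_mono_on hbrint.integrableOn
      · apply Integrable.integrableOn
        apply Integrable.const_mul
        apply Integrable.mono' ((integrable_const |l|).add hmom)
        · apply Continuous.aestronglyMeasurable
          exact (continuous_const.sub continuous_id).mul
            (Real.continuous_exp.comp ((continuous_const.mul ((continuous_const.sub continuous_id).pow 2)).div_const 8).neg)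
        · apply ae_of_all
          intro b
          rw [Real.norm_eq_abs, abs_mul, abs_of_nonneg (Real.exp_nonneg _)]
          have h2 : Real.exp (-(t * (l - b) ^ 2 / 8)) ≤ 1 := by
            apply Real.exp_le_one_iff.2
            have : 0 ≤ t * (l - b) ^ 2 / 8 := by positivity
            linarith
          calc |l - b| * Real.exp (-(t * (l - b) ^ 2 / 8)) ≤ |l - b| * 1 :=
              mul_le_mul_of_nonneg_left h2 (abs_nonneg _)
            _ ≤ |l| + |b| := by rw [mul_one]; exact abs_sub _ _
      · exact measurableSet_Iio
      · intro b hb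
        simp only [mem_Iio] at hb
        have h3 := hptwise b (by simp only [mem_Iio]; exact hb)
        have hbr : 0 ≤ l - b := by linarith
        calc (l - b) * Real.exp (b * x t - b ^ 2 * t / 2)
            ≤ (l - b) * ((D / c) * Real.exp (-(t * (l - b) ^ 2 / 8))) :=
              mul_le_mul_of_nonneg_left h3 hbr
          _ = (D / c) * ((l - b) * Real.exp (-(t * (l - b) ^ 2 / 8))) := by ring
    rw [integral_const_mul] at h1
    exact h1
  have hI0 : 0 ≤ (∫ b in Iio (l - δ), (l - b) * Real.exp (-(t * (l - b) ^ 2 / 8)) ∂μ) := by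
    apply setIntegral_nonneg_of_ae_restrict
    rw [EventuallyLE, ae_restrict_iff' measurableSet_Iio]
    apply ae_of_all
    intro b hb
    simp only [mem_Iio] at hb
    have := Real.exp_nonneg (-(t * (l - b) ^ 2 / 8))
    simp only [Pi.zero_apply]
    nlinarith
  have hAmZ : (∫ b in Iio (0:ℝ), Real.exp (b * x t - b ^ 2 * t / 2) ∂μ) ≤
      (∫ b, Real.exp (b * x t - b ^ 2 * t / 2) ∂μ) := by
    rw [hAm]
    nlinarith [mul_nonneg hp0.le hZpos.le]
  have hEfinal : E ≤ (∫ b, Real.exp (b * x t - b ^ 2 * t / 2) ∂μ) *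
      (δ * (1 - p) + (∫ b in Iio (l - δ), (l - b) * Real.exp (-(t * (l - b) ^ 2 / 8)) ∂μ) / c) := by
    have hDZ' : D ≤ (∫ b, Real.exp (b * x t - b ^ 2 * t / 2) ∂μ) := le_trans hDZ hAmZ
    have h6 : (D / c) * (∫ b in Iio (l - δ), (l - b) * Real.exp (-(t * (l - b) ^ 2 / 8)) ∂μ) ≤
        ((∫ b, Real.exp (b * x t - b ^ 2 * t / 2) ∂μ) / c) *
          (∫ b in Iio (l - δ), (l - b) * Real.exp (-(t * (l - b) ^ 2 / 8)) ∂μ) := by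
      apply mul_le_mul_of_nonneg_right _ hI0
      exact (div_le_div_iff_of_pos_right hcpos).2 hDZ'
    have h7 := le_trans (le_trans hsecond htail) h6
    rw [hEsplit]
    rw [hAm] at hfirst
    calc (∫ b in Iio (0:ℝ) ∩ Ici (l - δ), (l - b) * Real.exp (b * x t - b ^ 2 * t / 2) ∂μ) +
        (∫ b in Iio (0:ℝ) ∩ Iio (l - δ), (l - b) * Real.exp (b * x t - b ^ 2 * t / 2) ∂μ)
        ≤ δ * ((1 - p) * (∫ b, Real.exp (b * x t - b ^ 2 * t / 2) ∂μ)) +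
          ((∫ b, Real.exp (b * x t - b ^ 2 * t / 2) ∂μ) / c) *
            (∫ b in Iio (l - δ), (l - b) * Real.exp (-(t * (l - b) ^ 2 / 8)) ∂μ) :=
          add_le_add hfirst h7
      _ = (∫ b, Real.exp (b * x t - b ^ 2 * t / 2) ∂μ) *
          (δ * (1 - p) + (∫ b in Iio (l - δ), (l - b) * Real.exp (-(t * (l - b) ^ 2 / 8)) ∂μ) / c) := by
          ring
  rw [Real.dist_eq]
  have hnum : (∫ b in Iio (0:ℝ), b * Real.exp (b * x t - b ^ 2 * t / 2) ∂μ) /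
      (∫ b, Real.exp (b * x t - b ^ 2 * t / 2) ∂μ) - (1 - p) * l =
      -(E / (∫ b, Real.exp (b * x t - b ^ 2 * t / 2) ∂μ)) := by
    rw [hEeq, hAm]
    exact pre_halg_neg _ _ hZpos
  rw [hnum, abs_neg, abs_of_nonneg (div_nonneg hE0 hZpos.le)]
  rw [div_lt_iff₀ hZpos]
  calc E ≤ (∫ b, Real.exp (b * x t - b ^ 2 * t / 2) ∂μ) *
      (δ * (1 - p) + (∫ b in Iio (l - δ), (l - b) * Real.exp (-(t * (l - b) ^ 2 / 8)) ∂μ) / c) := hEfinal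
    _ < ε' * (∫ b, Real.exp (b * x t - b ^ 2 * t / 2) ∂μ) := by
      have h8 : (∫ b in Iio (l - δ), (l - b) * Real.exp (-(t * (l - b) ^ 2 / 8)) ∂μ) / c < ε' / 2 := by
        rw [div_lt_iff₀ hcpos]
        calc (∫ b in Iio (l - δ), (l - b) * Real.exp (-(t * (l - b) ^ 2 / 8)) ∂μ) <
            c * (ε' / 2) := hIt
          _ = ε' / 2 * c := by ring
      have h9 : δ * (1 - p) + (∫ b in Iio (l - δ), (l - b) * Real.exp (-(t * (l - b) ^ 2 / 8)) ∂μ) / c < ε' := by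
        have : δ * (1 - p) ≤ δ := by nlinarith
        rw [hδdef] at this ⊢
        linarith
      nlinarith

theorem stmt_12 (μ : Measure ℝ) [IsProbabilityMeasure μ]
    (hμ0 : 0 < μ (Set.Ici (0:ℝ))) (hμ1 : μ (Set.Ici (0:ℝ)) < 1)
    (ε : ℝ) (hε : 0 < ε)
    (hexp : Integrable (fun b => Real.exp (ε * b ^ 2)) μ)
    (p : ℝ) (hp : p ∈ Set.Ioo (0:ℝ) 1)
    (x : ℝ → ℝ) (hx : ∀ t > (0:ℝ), tiltProb μ t (x t) (Set.Ici 0) = p) :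
    Tendsto (fun t => tiltMean μ t (x t) (Set.Ici 0)) atTop (nhds (p * rEnd μ)) ∧
    Tendsto (fun t => tiltMean μ t (x t) (Set.Iio 0)) atTop (nhds ((1 - p) * lEnd μ)) ∧
    Tendsto (fun t =>
        (1 - p) * tiltMean μ t (x t) (Set.Ici 0) - p * tiltMean μ t (x t) (Set.Iio 0))
      atTop (nhds ((rEnd μ - lEnd μ) * p * (1 - p))) := by
  obtain ⟨hp0, hp1⟩ := hp
  have hμ0' : μ (Set.Ici (0:ℝ)) ≠ 0 := hμ0.ne'
  have hμm : μ (Set.Iio (0:ℝ)) ≠ 0 := by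
    intro h
    have hc := measure_add_measure_compl (measurableSet_Iio (a := (0:ℝ))) (μ := μ)
    rw [Set.compl_Iio, h, zero_add, measure_univ] at hc
    exact absurd hc hμ1.ne
  obtain ⟨hr0, hr2, hr3⟩ := rEnd_facts μ hμ0'
  obtain ⟨hl0, hl2, hl3⟩ := lEnd_facts μ hμm
  have hmom : Integrable (fun b : ℝ => |b|) μ := integrable_abs_id μ hε hexp
  set r : ℝ := rEnd μ with hrdef
  set l : ℝ := lEnd μ with hldef
  have hZfull : ∀ t ≥ (1:ℝ),
      0 < (∫ b, Real.exp (b * x t - b ^ 2 * t / 2) ∂μ) ∧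
      (∫ b in Set.Ici (0:ℝ), Real.exp (b * x t - b ^ 2 * t / 2) ∂μ) =
        p * (∫ b, Real.exp (b * x t - b ^ 2 * t / 2) ∂μ) ∧
      (∫ b in Set.Iio (0:ℝ), Real.exp (b * x t - b ^ 2 * t / 2) ∂μ) =
        (1 - p) * (∫ b, Real.exp (b * x t - b ^ 2 * t / 2) ∂μ) := by
    intro t ht
    have ht0 : (0:ℝ) < t := lt_of_lt_of_le zero_lt_one ht
    have hxt := hx t ht0
    rw [tiltProb] at hxt
    exact basics μ ht0 ⟨hp0, hp1⟩ hxt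
  have hZ2 : ∀ t ≥ (1:ℝ),
      (∫ b in Set.Ici (0:ℝ), Real.exp (b * x t - b ^ 2 * t / 2) ∂μ) =
        p * (∫ b, Real.exp (b * x t - b ^ 2 * t / 2) ∂μ) ∧
      (∫ b in Set.Iio (0:ℝ), Real.exp (b * x t - b ^ 2 * t / 2) ∂μ) =
        (1 - p) * (∫ b, Real.exp (b * x t - b ^ 2 * t / 2) ∂μ) :=
    fun t ht => ⟨(hZfull t ht).2.1, (hZfull t ht).2.2⟩
  have hAplus : ∀ η > (0:ℝ), ∃ T ≥ (1:ℝ), ∀ t ≥ T, x t ≤ (r + η) * t :=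
    fun η hη => stepA_plus μ ⟨hp0, hp1⟩ hr0 hη (hr2 η hη).ne' x hZ2
  have hAminus : ∀ η > (0:ℝ), ∃ T ≥ (1:ℝ), ∀ t ≥ T, (l - η) * t ≤ x t :=
    fun η hη => stepA_minus μ ⟨hp0, hp1⟩ hl0 hη (hl2 η hη).ne' x hZ2
  have h1 : Tendsto (fun t => tiltMean μ t (x t) (Set.Ici 0)) atTop (nhds (p * r)) := by
    have := main_pos μ ⟨hp0, hp1⟩ hr0 (fun ε' hε' => (hr2 ε' hε').ne') hr3 hmom x
      (fun t ht => ⟨(hZfull t ht).1, (hZfull t ht).2.1⟩) hAplus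
    simpa [tiltMean] using this
  have h2 : Tendsto (fun t => tiltMean μ t (x t) (Set.Iio 0)) atTop (nhds ((1 - p) * l)) := by
    have := main_neg μ ⟨hp0, hp1⟩ hl0 (fun ε' hε' => (hl2 ε' hε').ne') hl3 hmom x
      (fun t ht => ⟨(hZfull t ht).1, (hZfull t ht).2.2⟩) hAminus
    simpa [tiltMean] using this
  refine ⟨h1, h2, ?_⟩
  have h3 := (h1.const_mul (1 - p)).sub (h2.const_mul p)
  have heq : (r - l) * p * (1 - p) = (1 - p) * (p * r) - p * ((1 - p) * l) := by ring
  rw [heq]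
  exact h3
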